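/- For d ≥ 1, let Ψ₀ and Ψ₁ be the super-operators from d×d matrices to (d+1)×(d+1) matrices defined by: Ψ₀[X] has (Tr(X)·I_d + Xᵀ)/(d+1) as its top-left d×d block and zeros elsewhere; Ψ₁[X] has (Tr(X)·I_d − Xᵀ)/(d+1) as its top-left d×d block, 2·Tr(X)/(d+1) in the bottom-right corner entry, and zeros elsewhere. Then for every state ρ on ℂ^d, ‖Ψ₀[ρ] − Ψ₁[ρ]‖_tr = 4/(d+1). In particular, sup { ‖Ψ₀[τ] − Ψ₁[τ]‖_tr : τ a state on ℂ^d } = 4/(d+1). -/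

import Mathlib

open scoped Kronecker ComplexOrder Matrix

namespace ChannelDiscrimination

/-- The trace norm `Tr √(Aᴴ A)` of a complex square matrix. -/
noncomputable def traceNorm {ι : Type*} [Fintype ι] [DecidableEq ι]
    (A : Matrix ι ι ℂ) : ℝ :=
  ((Matrix.posSemidef_conjTranspose_mul_self A).1.eigenvectorUnitary.1 *
      Matrix.diagonal (((↑) : ℝ → ℂ) ∘ (√·) ∘ (Matrix.posSemidef_conjTranspose_mul_self A).1.eigenvalues) *
      (star (Matrix.posSemidef_conjTranspose_mul_self A).1.eigenvectorUnitary :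
        Matrix ι ι ℂ)).trace.re

/-- A state: a positive semidefinite matrix of trace one. -/
def IsState {ι : Type*} [Fintype ι] (ρ : Matrix ι ι ℂ) : Prop :=
  ρ.PosSemidef ∧ ρ.trace = 1

/-- Separability of a bipartite matrix on `ℂ^m ⊗ ℂ^n`. -/
def IsSeparable {m n : ℕ} (σ : Matrix (Fin m × Fin n) (Fin m × Fin n) ℂ) : Prop :=
  ∃ (N : ℕ) (p : Fin N → ℝ) (ρ : Fin N → Matrix (Fin m) (Fin m) ℂ)
    (τ : Fin N → Matrix (Fin n) (Fin n) ℂ),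
    (∀ i, 0 ≤ p i) ∧ (∑ i, p i = 1) ∧ (∀ i, IsState (ρ i)) ∧ (∀ i, IsState (τ i)) ∧
    σ = ∑ i, (p i : ℂ) • (ρ i ⊗ₖ τ i)

/-- `Φ ⊗ id_n` for a super-operator `Φ` from `m×m` to `k×k` matrices. -/
def tensorId {m k : ℕ} (n : ℕ)
    (Φ : Matrix (Fin m) (Fin m) ℂ →ₗ[ℂ] Matrix (Fin k) (Fin k) ℂ) :
    Matrix (Fin m × Fin n) (Fin m × Fin n) ℂ →ₗ[ℂ]
      Matrix (Fin k × Fin n) (Fin k × Fin n) ℂ where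
  toFun M := Matrix.of fun p q => Φ (Matrix.of fun i j => M (i, p.2) (j, q.2)) p.1 q.1
  map_add' M N := by
    ext p q
    show Φ ((Matrix.of fun i j => M (i, p.2) (j, q.2)) +
        (Matrix.of fun i j => N (i, p.2) (j, q.2))) p.1 q.1 = _
    rw [map_add]
    rfl
  map_smul' c M := by
    ext p q
    show Φ (c • (Matrix.of fun i j => M (i, p.2) (j, q.2))) p.1 q.1 = _
    rw [map_smul]
    rfl

/-- A positive super-operator. -/
def IsPositiveMap {m k : ℕ}
    (Φ : Matrix (Fin m) (Fin m) ℂ →ₗ[ℂ] Matrix (Fin k) (Fin k) ℂ) : Prop :=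
  ∀ X : Matrix (Fin m) (Fin m) ℂ, X.PosSemidef → (Φ X).PosSemidef

/-- A trace-preserving super-operator. -/
def IsTracePreserving {m k : ℕ}
    (Φ : Matrix (Fin m) (Fin m) ℂ →ₗ[ℂ] Matrix (Fin k) (Fin k) ℂ) : Prop :=
  ∀ X : Matrix (Fin m) (Fin m) ℂ, (Φ X).trace = X.trace

/-- A completely positive super-operator: `Φ ⊗ id_n` is positive for every `n`. -/
def IsCompletelyPositive {m k : ℕ}
    (Φ : Matrix (Fin m) (Fin m) ℂ →ₗ[ℂ] Matrix (Fin k) (Fin k) ℂ) : Prop :=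
  ∀ (n : ℕ) (M : Matrix (Fin m × Fin n) (Fin m × Fin n) ℂ),
    M.PosSemidef → (tensorId n Φ M).PosSemidef

/-- A (quantum) channel: completely positive and trace-preserving. -/
def IsChannel {m k : ℕ}
    (Φ : Matrix (Fin m) (Fin m) ℂ →ₗ[ℂ] Matrix (Fin k) (Fin k) ℂ) : Prop :=
  IsCompletelyPositive Φ ∧ IsTracePreserving Φ

/-- An entanglement-breaking channel. -/
def IsEntanglementBreaking {m k : ℕ}
    (Φ : Matrix (Fin m) (Fin m) ℂ →ₗ[ℂ] Matrix (Fin k) (Fin k) ℂ) : Prop :=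
  IsChannel Φ ∧ ∀ (n : ℕ) (ρ : Matrix (Fin m × Fin n) (Fin m × Fin n) ℂ),
    IsState ρ → IsSeparable (tensorId n Φ ρ)

/-- `pad1 M c` is the `(k+1)×(k+1)` matrix with `M` as its top-left `k×k` block,
`c` in the bottom-right corner, and zeros elsewhere. -/
def pad1 {k : ℕ} (M : Matrix (Fin k) (Fin k) ℂ) (c : ℂ) :
    Matrix (Fin (k + 1)) (Fin (k + 1)) ℂ :=
  Matrix.of fun a b =>
    Fin.lastCases (Fin.lastCases c (fun _ => 0) b)
      (fun i => Fin.lastCases 0 (fun j => M i j) b) a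

/-- Partial transpose on the first tensor factor. -/
def ptransposeFst {d n : ℕ} (ρ : Matrix (Fin d × Fin n) (Fin d × Fin n) ℂ) :
    Matrix (Fin d × Fin n) (Fin d × Fin n) ℂ :=
  Matrix.of fun p q => ρ (q.1, p.2) (p.1, q.2)

section aux

variable {k : ℕ}

@[simp] lemma pad1_cc (M : Matrix (Fin k) (Fin k) ℂ) (c : ℂ) (i j : Fin k) :
    pad1 M c i.castSucc j.castSucc = M i j := by simp [pad1]

@[simp] lemma pad1_ll (M : Matrix (Fin k) (Fin k) ℂ) (c : ℂ) :
    pad1 M c (Fin.last k) (Fin.last k) = c := by simp [pad1]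

@[simp] lemma pad1_cl (M : Matrix (Fin k) (Fin k) ℂ) (c : ℂ) (i : Fin k) :
    pad1 M c i.castSucc (Fin.last k) = 0 := by simp [pad1]

@[simp] lemma pad1_lc (M : Matrix (Fin k) (Fin k) ℂ) (c : ℂ) (j : Fin k) :
    pad1 M c (Fin.last k) j.castSucc = 0 := by simp [pad1]

lemma pad1_sub (M N : Matrix (Fin k) (Fin k) ℂ) (c e : ℂ) :
    pad1 M c - pad1 N e = pad1 (M - N) (c - e) := by
  ext a b
  induction a using Fin.lastCases with
  | last => induction b using Fin.lastCases with
    | last => simp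
    | cast j => simp
  | cast i => induction b using Fin.lastCases with
    | last => simp
    | cast j => simp

lemma pad1_mul (M N : Matrix (Fin k) (Fin k) ℂ) (c e : ℂ) :
    pad1 M c * pad1 N e = pad1 (M * N) (c * e) := by
  ext a b
  rw [Matrix.mul_apply]
  rw [Fin.sum_univ_castSucc]
  induction a using Fin.lastCases with
  | last => induction b using Fin.lastCases with
    | last => simp
    | cast j => simp
  | cast i => induction b using Fin.lastCases with
    | last => simp
    | cast j => simp [Matrix.mul_apply]

lemma pad1_conjTranspose (M : Matrix (Fin k) (Fin k) ℂ) (c : ℂ) :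
    (pad1 M c)ᴴ = pad1 Mᴴ (starRingEnd ℂ c) := by
  ext a b
  rw [Matrix.conjTranspose_apply]
  induction a using Fin.lastCases with
  | last => induction b using Fin.lastCases with
    | last => simp
    | cast j => simp
  | cast i => induction b using Fin.lastCases with
    | last => simp
    | cast j => simp [Matrix.conjTranspose_apply]

lemma pad1_trace (M : Matrix (Fin k) (Fin k) ℂ) (c : ℂ) :
    (pad1 M c).trace = M.trace + c := by
  simp only [Matrix.trace, Matrix.diag]
  rw [Fin.sum_univ_castSucc]
  simp

lemma pad1_posSemidef {M : Matrix (Fin k) (Fin k) ℂ} {c : ℂ}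
    (hM : M.PosSemidef) (hc : 0 ≤ c) : (pad1 M c).PosSemidef := by
  have hcc : (starRingEnd ℂ) c = c := by
    rw [Complex.conj_eq_iff_im]
    exact ((Complex.nonneg_iff.mp hc).2).symm
  refine Matrix.PosSemidef.of_dotProduct_mulVec_nonneg ?_ ?_
  · show (pad1 M c)ᴴ = pad1 M c
    rw [pad1_conjTranspose, hcc, hM.1.eq]
  · intro x
    have hmv : ∀ a, (pad1 M c *ᵥ x) a =
        Fin.lastCases (c * x (Fin.last k)) (fun i => (M *ᵥ (x ∘ Fin.castSucc)) i) a := by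
      intro a
      simp only [Matrix.mulVec, dotProduct]
      rw [Fin.sum_univ_castSucc]
      induction a using Fin.lastCases with
      | last => simp
      | cast i => simp [Matrix.mulVec, dotProduct]
    have : dotProduct (star x) (pad1 M c *ᵥ x) =
        dotProduct (star (x ∘ Fin.castSucc)) (M *ᵥ (x ∘ Fin.castSucc))
          + (starRingEnd ℂ) (x (Fin.last k)) * (c * x (Fin.last k)) := by
      simp only [dotProduct, Pi.star_apply]
      rw [Fin.sum_univ_castSucc]
      congr 1
      · exact Finset.sum_congr rfl fun i _ => by rw [hmv]; simp
      · rw [hmv]; simp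
    rw [this]
    have h1 := hM.dotProduct_mulVec_nonneg (x ∘ Fin.castSucc)
    have h2 : 0 ≤ (starRingEnd ℂ) (x (Fin.last k)) * (c * x (Fin.last k)) := by
      have : (starRingEnd ℂ) (x (Fin.last k)) * (c * x (Fin.last k))
          = c * ((starRingEnd ℂ) (x (Fin.last k)) * x (Fin.last k)) := by ring
      rw [this]
      exact mul_nonneg hc (by simpa using star_mul_self_nonneg (x (Fin.last k)))
    exact add_nonneg h1 h2

lemma posSemidef_smul {M : Matrix (Fin k) (Fin k) ℂ} {c : ℂ}
    (hM : M.PosSemidef) (hc : 0 ≤ c) : (c • M).PosSemidef := by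
  have hcc : (starRingEnd ℂ) c = c := by
    rw [Complex.conj_eq_iff_im]
    exact ((Complex.nonneg_iff.mp hc).2).symm
  refine Matrix.PosSemidef.of_dotProduct_mulVec_nonneg ?_ ?_
  · show (c • M)ᴴ = c • M
    rw [Matrix.conjTranspose_smul, hM.1.eq]
    simp [hcc]
  · intro x
    rw [Matrix.smul_mulVec, dotProduct_smul]
    exact mul_nonneg hc (hM.dotProduct_mulVec_nonneg x)

end aux

/-- For the transposition channels `Ψ₀, Ψ₁`, every state `ρ` on `ℂ^d` satisfies
`‖Ψ₀[ρ] − Ψ₁[ρ]‖_tr = 4/(d+1)`, so the supremum over states equals `4/(d+1)`. -/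
theorem transposition_channels_trace_distance
    {d : ℕ} (hd : 1 ≤ d)
    (Ψ₀ Ψ₁ : Matrix (Fin d) (Fin d) ℂ →ₗ[ℂ] Matrix (Fin (d + 1)) (Fin (d + 1)) ℂ)
    (hΨ₀ : ∀ X : Matrix (Fin d) (Fin d) ℂ,
      Ψ₀ X = pad1 (((d : ℂ) + 1)⁻¹ • (X.trace • (1 : Matrix (Fin d) (Fin d) ℂ) + Xᵀ)) 0)
    (hΨ₁ : ∀ X : Matrix (Fin d) (Fin d) ℂ,
      Ψ₁ X = pad1 (((d : ℂ) + 1)⁻¹ • (X.trace • (1 : Matrix (Fin d) (Fin d) ℂ) - Xᵀ))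
        (2 * X.trace / ((d : ℂ) + 1))) :
    (∀ ρ : Matrix (Fin d) (Fin d) ℂ, IsState ρ →
        traceNorm (Ψ₀ ρ - Ψ₁ ρ) = 4 / ((d : ℝ) + 1)) ∧
      sSup {x : ℝ | ∃ τ : Matrix (Fin d) (Fin d) ℂ, IsState τ ∧
        x = traceNorm (Ψ₀ τ - Ψ₁ τ)} = 4 / ((d : ℝ) + 1) := by
  have hdR : (0:ℝ) < (d:ℝ) + 1 := by positivity
  have hdC : ((d:ℂ) + 1) ≠ 0 := by
    have : ((d:ℂ) + 1) = (((d:ℝ) + 1 : ℝ) : ℂ) := by push_cast; ring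
    rw [this]
    exact_mod_cast hdR.ne'
  set rr : ℝ := 2 / ((d:ℝ) + 1) with hrrdef
  have hrr0 : (0 : ℝ) ≤ rr := by positivity
  have hrC : (0 : ℂ) ≤ (rr : ℂ) := by
    rw [Complex.le_def]
    simp [hrr0]
  have hrcast : (rr : ℂ) = 2 / ((d:ℂ) + 1) := by
    rw [hrrdef]
    push_cast
    ring
  have key : ∀ ρ : Matrix (Fin d) (Fin d) ℂ, IsState ρ →
      traceNorm (Ψ₀ ρ - Ψ₁ ρ) = 4 / ((d : ℝ) + 1) := by
    intro ρ hρ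
    obtain ⟨hpsd, htr⟩ := hρ
    have hρt : ρᵀ.PosSemidef := hpsd.transpose
    set M : Matrix (Fin d) (Fin d) ℂ := (rr : ℂ) • ρᵀ with hMdef
    have hMpsd : M.PosSemidef := posSemidef_smul hρt hrC
    have hD : Ψ₀ ρ - Ψ₁ ρ = pad1 M (-(rr : ℂ)) := by
      rw [hΨ₀, hΨ₁, pad1_sub, htr]
      have hc2 : (0 : ℂ) - 2 * 1 / ((d:ℂ) + 1) = -(rr : ℂ) := by
        rw [hrcast]; ring
      rw [hc2, hMdef, hrcast, ← smul_sub]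
      have h2 : ((1:ℂ) • (1 : Matrix (Fin d) (Fin d) ℂ) + ρᵀ) - ((1:ℂ) • 1 - ρᵀ)
          = (2:ℂ) • ρᵀ := by
        rw [one_smul, two_smul]
        abel
      rw [h2, smul_smul]
      field_simp
    set S : Matrix (Fin (d+1)) (Fin (d+1)) ℂ := pad1 M (rr : ℂ) with hSdef
    have hSpsd : S.PosSemidef := pad1_posSemidef hMpsd hrC
    have hMherm : Mᴴ = M := hMpsd.1.eq
    have hsq : S ^ 2 = (pad1 M (-(rr : ℂ)))ᴴ * pad1 M (-(rr : ℂ)) := by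
      rw [pow_two, hSdef, pad1_mul, pad1_conjTranspose, hMherm, pad1_mul]
      simp [Complex.conj_ofReal]
    have hsqrt : cfc Real.sqrt ((pad1 M (-(rr : ℂ)))ᴴ * pad1 M (-(rr : ℂ))) = S := by
      have hSa : IsSelfAdjoint S := hSpsd.1
      rw [← hsq, ← cfc_comp_pow (fun x => Real.sqrt x) 2 S]
      conv_rhs => rw [← cfc_id' ℝ S]
      apply cfc_congr
      intro x hx
      rw [hSpsd.1.spectrum_real_eq_range_eigenvalues] at hx
      obtain ⟨i, rfl⟩ := hx
      exact Real.sqrt_sq (hSpsd.eigenvalues_nonneg i)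
    have hT : ∀ A : Matrix (Fin (d+1)) (Fin (d+1)) ℂ,
        traceNorm A = (cfc Real.sqrt (Aᴴ * A)).trace.re := by
      intro A
      rw [(Matrix.posSemidef_conjTranspose_mul_self A).1.cfc_eq, Matrix.IsHermitian.cfc,
        Unitary.conjStarAlgAut_apply]
      rfl
    have htrS : S.trace = ((2 * rr : ℝ) : ℂ) := by
      rw [hSdef, pad1_trace, hMdef, Matrix.trace_smul, Matrix.trace_transpose, htr,
        smul_eq_mul, mul_one]
      push_cast
      ring
    rw [hD, hT, hsqrt, htrS]
    rw [Complex.ofReal_re, hrrdef]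
    ring
  refine ⟨key, ?_⟩
  have hτ : IsState ((((d:ℝ)⁻¹ : ℝ) : ℂ) • (1 : Matrix (Fin d) (Fin d) ℂ)) := by
    constructor
    · refine posSemidef_smul Matrix.PosSemidef.one ?_
      rw [Complex.le_def]
      simp [inv_nonneg]
    · rw [Matrix.trace_smul, Matrix.trace_one]
      have hd0 : (d:ℝ) ≠ 0 := by
        exact_mod_cast Nat.one_le_iff_ne_zero.mp hd
      simp only [smul_eq_mul, Fintype.card_fin]
      push_cast
      field_simp
  have hset : {x : ℝ | ∃ τ : Matrix (Fin d) (Fin d) ℂ, IsState τ ∧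
      x = traceNorm (Ψ₀ τ - Ψ₁ τ)} = {4 / ((d : ℝ) + 1)} := by
    ext x
    constructor
    · rintro ⟨τ, hτ', rfl⟩
      exact key τ hτ'
    · rintro rfl
      exact ⟨_, hτ, (key _ hτ).symm⟩
  rw [hset, csSup_singleton]

end ChannelDiscrimination
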